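/- Let E be a finite-dimensional real normed vector space, B : E → (E →L[ℝ] E) a C^∞ map, and u, c ∈ E such that B(p)(u) = p + c for all p ∈ E, and such that (DB)(p)(v) ∘ (DB)(p)(w) = (DB)(p)(w) ∘ (DB)(p)(v) for all p, v, w ∈ E. Define a multiplication on smooth vector fields by (X∘Y)(p) := (DB)(p)(X(p))(Y(p)). Then ∘ is commutative and associative, the constant vector field with value u is an identity for ∘, and (E, ∘) satisfies the Hertling–Manin F-manifold identity: P_{X∘Y}(Z,W) = X∘P_Y(Z,W) + Y∘P_X(Z,W) for all smooth vector fields X, Y, Z, W, where P_X(Z,W) := [X, Z∘W] − [X,Z]∘W − Z∘[X,W]. -/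

import Mathlib

open ContDiff

variable {E : Type*} [NormedAddCommGroup E] [NormedSpace ℝ E]

/-- Lie bracket of vector fields on a normed space:
`[X,Y](p) = (DY)(p)(X(p)) - (DX)(p)(Y(p))`. -/
noncomputable def lieB (X Y : E → E) : E → E :=
  fun p => fderiv ℝ Y p (X p) - fderiv ℝ X p (Y p)

/-- Multiplication on vector fields induced by `B`: `(X∘Y)(p) = (DB)(p)(X(p))(Y(p))`. -/
noncomputable def mulB (B : E → (E →L[ℝ] E)) (X Y : E → E) : E → E :=
  fun p => fderiv ℝ B p (X p) (Y p)

/-- The Hertling–Manin expression `P_X(Z,W)` for the multiplication `mulB`. -/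
noncomputable def hmPB (B : E → (E →L[ℝ] E)) (X Z W : E → E) : E → E :=
  fun p => lieB X (mulB B Z W) p - mulB B (lieB X Z) W p - mulB B Z (lieB X W) p

section Aux

set_option linter.unusedSectionVars false

lemma aux_DBu (B : E → (E →L[ℝ] E)) (hB : Differentiable ℝ B) (u c : E)
    (hBu : ∀ p : E, B p u = p + c) : ∀ p v : E, fderiv ℝ B p v u = v := by
  intro p v
  have h1 : fderiv ℝ (fun q => B q u) p = fderiv ℝ (fun q : E => q + c) p := by
    congr 1; funext q; exact hBu q
  rw [fderiv_clm_apply (hB p) (differentiableAt_const u), fderiv_add_const, fderiv_id'] at h1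
  have h2 := congrArg (fun L : E →L[ℝ] E => L v) h1
  simpa using h2

-- commutativity, identity, associativity (pointwise algebra)
lemma aux_comm (B : E → (E →L[ℝ] E)) (u : E)
    (hDu : ∀ p v : E, fderiv ℝ B p v u = v)
    (hcomm : ∀ p v w : E,
      (fderiv ℝ B p v).comp (fderiv ℝ B p w) = (fderiv ℝ B p w).comp (fderiv ℝ B p v)) :
    ∀ p v w : E, fderiv ℝ B p v w = fderiv ℝ B p w v := by
  intro p v w
  have := congrArg (fun L : E →L[ℝ] E => L u) (hcomm p v w)
  simpa [hDu] using this

lemma aux_assoc (B : E → (E →L[ℝ] E))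
    (hc : ∀ p v w : E, fderiv ℝ B p v w = fderiv ℝ B p w v)
    (hcomm : ∀ p v w : E,
      (fderiv ℝ B p v).comp (fderiv ℝ B p w) = (fderiv ℝ B p w).comp (fderiv ℝ B p v)) :
    ∀ p v w x : E,
      fderiv ℝ B p (fderiv ℝ B p v w) x = fderiv ℝ B p v (fderiv ℝ B p w x) := by
  intro p v w x
  have h1 := congrArg (fun L : E →L[ℝ] E => L w) (hcomm p x v)
  simp only [ContinuousLinearMap.comp_apply] at h1
  calc fderiv ℝ B p (fderiv ℝ B p v w) x = fderiv ℝ B p x (fderiv ℝ B p v w) := hc ..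
    _ = fderiv ℝ B p v (fderiv ℝ B p x w) := h1
    _ = fderiv ℝ B p v (fderiv ℝ B p w x) := by rw [hc p x w]

lemma fd_app {F G : Type*} [NormedAddCommGroup F] [NormedSpace ℝ F]
    [NormedAddCommGroup G] [NormedSpace ℝ G]
    {c : E → (F →L[ℝ] G)} {g : E → F} {p : E}
    (hc : DifferentiableAt ℝ c p) (hg : DifferentiableAt ℝ g p) (h : E) :
    fderiv ℝ (fun q => c q (g q)) p h = c p (fderiv ℝ g p h) + fderiv ℝ c p h (g p) := by
  rw [fderiv_clm_apply hc hg]; simp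

-- derivative of q ↦ DB q v w
lemma fd_DBvw (B : E → (E →L[ℝ] E)) (hDB : Differentiable ℝ (fderiv ℝ B)) (p v w h : E) :
    fderiv ℝ (fun q => fderiv ℝ B q v w) p h = fderiv ℝ (fderiv ℝ B) p h v w := by
  have h1 : DifferentiableAt ℝ (fun q => fderiv ℝ B q v) p :=
    (hDB p).clm_apply (differentiableAt_const v)
  rw [fd_app h1 (differentiableAt_const w)]
  have h2 := fd_app (c := fderiv ℝ B) (g := fun _ => v) (hDB p) (differentiableAt_const v) h
  simp only [fderiv_fun_const, Pi.zero_apply, ContinuousLinearMap.zero_apply, map_zero,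
    zero_add] at h2 ⊢
  rw [h2]

-- symmetry of S in last two arguments (from commutativity)
lemma aux_S_sym2 (B : E → (E →L[ℝ] E)) (hDB : Differentiable ℝ (fderiv ℝ B))
    (hc : ∀ p v w : E, fderiv ℝ B p v w = fderiv ℝ B p w v) (p h v w : E) :
    fderiv ℝ (fderiv ℝ B) p h v w = fderiv ℝ (fderiv ℝ B) p h w v := by
  have e : (fun q => fderiv ℝ B q v w) = (fun q => fderiv ℝ B q w v) := by
    funext q; exact hc q v w
  have := congrArg (fun f => fderiv ℝ f p h) e
  rwa [fd_DBvw B hDB, fd_DBvw B hDB] at this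

-- symmetry of S in first two arguments (second derivative symmetry)
lemma aux_S_sym1 (B : E → (E →L[ℝ] E)) (hB : ContDiff ℝ ∞ B) (p h v w : E) :
    fderiv ℝ (fderiv ℝ B) p h v w = fderiv ℝ (fderiv ℝ B) p v h w := by
  have hsym : IsSymmSndFDerivAt ℝ B p := hB.contDiffAt.isSymmSndFDerivAt (by rw [minSmoothness_of_isRCLikeNormedField]; decide)
  rw [hsym h v]

-- the differentiated associativity identity
lemma aux_S3 (B : E → (E →L[ℝ] E)) (hDB : Differentiable ℝ (fderiv ℝ B))
    (ha : ∀ p v w x : E,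
      fderiv ℝ B p (fderiv ℝ B p v w) x = fderiv ℝ B p v (fderiv ℝ B p w x))
    (p h v w x : E) :
    fderiv ℝ (fderiv ℝ B) p h (fderiv ℝ B p v w) x
      + fderiv ℝ B p (fderiv ℝ (fderiv ℝ B) p h v w) x
    = fderiv ℝ (fderiv ℝ B) p h v (fderiv ℝ B p w x)
      + fderiv ℝ B p v (fderiv ℝ (fderiv ℝ B) p h w x) := by
  have hg : DifferentiableAt ℝ (fun q => fderiv ℝ B q v w) p :=
    ((hDB p).clm_apply (differentiableAt_const v)).clm_apply (differentiableAt_const w)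
  have hg' : DifferentiableAt ℝ (fun q => fderiv ℝ B q w x) p :=
    ((hDB p).clm_apply (differentiableAt_const w)).clm_apply (differentiableAt_const x)
  have hc3 : DifferentiableAt ℝ (fun q => fderiv ℝ B q (fderiv ℝ B q v w)) p :=
    (hDB p).clm_apply hg
  have hc4 : DifferentiableAt ℝ (fun q => fderiv ℝ B q v) p :=
    (hDB p).clm_apply (differentiableAt_const v)
  have e : (fun q => fderiv ℝ B q (fderiv ℝ B q v w) x)
      = (fun q => fderiv ℝ B q v (fderiv ℝ B q w x)) := by
    funext q; exact ha q v w x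
  have hD := congrArg (fun f => fderiv ℝ f p h) e
  rw [fd_app hc3 (differentiableAt_const x) h, fd_app hc4 hg' h] at hD
  rw [fd_app (hDB p) hg h] at hD
  simp only [fderiv_fun_const, Pi.zero_apply, ContinuousLinearMap.zero_apply, map_zero, zero_add,
    ContinuousLinearMap.add_apply] at hD
  rw [fd_DBvw B hDB, fd_DBvw B hDB] at hD
  have h2 := fd_app (c := fderiv ℝ B) (g := fun _ => v) (hDB p) (differentiableAt_const v) h
  simp only [fderiv_fun_const, Pi.zero_apply, ContinuousLinearMap.zero_apply, map_zero,
    zero_add] at h2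
  rw [h2] at hD
  rw [add_comm] at hD
  rw [hD, add_comm]

-- L7 : derivative of mulB
lemma fd_mulB (B : E → (E →L[ℝ] E)) (hDB : Differentiable ℝ (fderiv ℝ B))
    {X Y : E → E} (hX : Differentiable ℝ X) (hY : Differentiable ℝ Y) (p h : E) :
    fderiv ℝ (mulB B X Y) p h
      = fderiv ℝ (fderiv ℝ B) p h (X p) (Y p)
        + fderiv ℝ B p (fderiv ℝ X p h) (Y p)
        + fderiv ℝ B p (X p) (fderiv ℝ Y p h) := by
  have hcX : DifferentiableAt ℝ (fun q => fderiv ℝ B q (X q)) p :=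
    (hDB p).clm_apply (hX p)
  have e1 : fderiv ℝ (mulB B X Y) p h
      = fderiv ℝ B p (X p) (fderiv ℝ Y p h)
        + fderiv ℝ (fun q => fderiv ℝ B q (X q)) p h (Y p) :=
    fd_app hcX (hY p) h
  have e2 : fderiv ℝ (fun q => fderiv ℝ B q (X q)) p h
      = fderiv ℝ B p (fderiv ℝ X p h) + fderiv ℝ (fderiv ℝ B) p h (X p) :=
    fd_app (hDB p) (hX p) h
  rw [e1, e2]
  simp only [ContinuousLinearMap.add_apply]
  abel

-- L8 : hmPB formula (only needs Z, W differentiable)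
lemma hmPB_formula (B : E → (E →L[ℝ] E)) (hDB : Differentiable ℝ (fderiv ℝ B))
    (X : E → E) {Z W : E → E} (hZ : Differentiable ℝ Z) (hW : Differentiable ℝ W) (p : E) :
    hmPB B X Z W p
      = fderiv ℝ (fderiv ℝ B) p (X p) (Z p) (W p)
        + fderiv ℝ B p (fderiv ℝ X p (Z p)) (W p)
        + fderiv ℝ B p (Z p) (fderiv ℝ X p (W p))
        - fderiv ℝ X p (fderiv ℝ B p (Z p) (W p)) := by
  simp only [hmPB, lieB, mulB]
  rw [fd_mulB B hDB hZ hW p (X p)]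
  simp only [map_sub, ContinuousLinearMap.sub_apply, mulB]
  abel

-- the key pointwise algebraic identity
lemma key_alg (A : E →L[ℝ] E →L[ℝ] E) (S : E →L[ℝ] E →L[ℝ] E →L[ℝ] E)
    (hA2 : ∀ v w, A v w = A w v)
    (hA3 : ∀ v w x, A (A v w) x = A v (A w x))
    (hS1 : ∀ h v w, S h v w = S v h w)
    (hS3 : ∀ h v w x, S h (A v w) x + A (S h v w) x = S h v (A w x) + A v (S h w x))
    (x y z w : E) (X' Y' : E →L[ℝ] E) :
    S (A x y) z w + A (S z x y + A (X' z) y + A x (Y' z)) w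
      + A z (S w x y + A (X' w) y + A x (Y' w))
      - (S (A z w) x y + A (X' (A z w)) y + A x (Y' (A z w)))
    = A x (S y z w + A (Y' z) w + A z (Y' w) - Y' (A z w))
      + A y (S x z w + A (X' z) w + A z (X' w) - X' (A z w)) := by
  have hswap : ∀ a b c, A a (A b c) = A b (A a c) := by
    intro a b c; rw [← hA3, hA2 a b, hA3]
  have h1 : S (A x y) z w + A (S z x y) w = S x z (A w y) + A x (S y z w) := by
    calc S (A x y) z w + A (S z x y) w = S z (A x y) w + A (S z x y) w := by rw [hS1]
      _ = S z x (A y w) + A x (S z y w) := hS3 z x y w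
      _ = S x z (A w y) + A x (S y z w) := by rw [hS1 z x, hA2 y w, hS1 z y]
  have h2 : S x (A z w) y + A (S x z w) y = S x z (A w y) + A z (S x w y) := hS3 x z w y
  have h3 : S (A z w) x y = S x (A z w) y := hS1 _ _ _
  have h4 : A z (S w x y) = A z (S x w y) := by rw [hS1 w x y]
  have a1 : A (A (X' z) y) w = A y (A (X' z) w) := by rw [hA3, hswap]
  have a2 : A (A x (Y' z)) w = A x (A (Y' z) w) := hA3 _ _ _
  have a3 : A z (A (X' w) y) = A y (A z (X' w)) := by rw [hA2 (X' w) y, hswap]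
  have a4 : A z (A x (Y' w)) = A x (A z (Y' w)) := hswap _ _ _
  have a5 : A (X' (A z w)) y = A y (X' (A z w)) := hA2 _ _
  have hc : A (S x z w) y = A y (S x z w) := hA2 _ _
  simp only [map_add, map_sub, ContinuousLinearMap.add_apply]
  linear_combination (norm := abel) h1 - h2 - h3 + h4 + a1 + a2 + a3 + a4 - a5 + hc

end Aux

/-- the multiplication induced by a primitive section data `(B,u)` is
commutative, associative, has the constant field `u` as identity, and satisfies
the Hertling–Manin F-manifold identity. -/
theorem stmt16 {E : Type*} [NormedAddCommGroup E] [NormedSpace ℝ E] [FiniteDimensional ℝ E]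
    (B : E → (E →L[ℝ] E)) (hB : ContDiff ℝ ∞ B) (u c : E)
    (hBu : ∀ p : E, B p u = p + c)
    (hcomm : ∀ p v w : E,
      (fderiv ℝ B p v).comp (fderiv ℝ B p w) = (fderiv ℝ B p w).comp (fderiv ℝ B p v)) :
    (∀ p v w : E, fderiv ℝ B p v w = fderiv ℝ B p w v) ∧
    (∀ p v w x : E,
      fderiv ℝ B p (fderiv ℝ B p v w) x = fderiv ℝ B p v (fderiv ℝ B p w x)) ∧
    (∀ X : E → E, ContDiff ℝ ∞ X → mulB B (fun _ => u) X = X) ∧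
    (∀ X Y Z W : E → E, ContDiff ℝ ∞ X → ContDiff ℝ ∞ Y → ContDiff ℝ ∞ Z →
      ContDiff ℝ ∞ W →
      hmPB B (mulB B X Y) Z W
        = fun p => mulB B X (hmPB B Y Z W) p + mulB B Y (hmPB B X Z W) p) := by
  have hB' : Differentiable ℝ B := hB.differentiable (by decide)
  have hDBsm : ContDiff ℝ ∞ (fderiv ℝ B) := hB.fderiv_right (by simp)
  have hDB : Differentiable ℝ (fderiv ℝ B) := hDBsm.differentiable (by decide)
  have hDu := aux_DBu B hB' u c hBu
  have hc := aux_comm B u hDu hcomm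
  have ha := aux_assoc B hc hcomm
  refine ⟨hc, ha, ?_, ?_⟩
  · intro X _
    funext p
    simp only [mulB]
    rw [hc p u (X p), hDu]
  · intro X Y Z W hX hY hZ hW
    have hXd : Differentiable ℝ X := hX.differentiable (by decide)
    have hYd : Differentiable ℝ Y := hY.differentiable (by decide)
    have hZd : Differentiable ℝ Z := hZ.differentiable (by decide)
    have hWd : Differentiable ℝ W := hW.differentiable (by decide)
    funext p
    rw [hmPB_formula B hDB (mulB B X Y) hZd hWd p]
    rw [fd_mulB B hDB hXd hYd p (Z p), fd_mulB B hDB hXd hYd p (W p),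
      fd_mulB B hDB hXd hYd p (fderiv ℝ B p (Z p) (W p))]
    have eR1 : mulB B X (hmPB B Y Z W) p
        = fderiv ℝ B p (X p) (hmPB B Y Z W p) := rfl
    have eR2 : mulB B Y (hmPB B X Z W) p
        = fderiv ℝ B p (Y p) (hmPB B X Z W p) := rfl
    rw [eR1, eR2, hmPB_formula B hDB Y hZd hWd p, hmPB_formula B hDB X hZd hWd p]
    have eM : mulB B X Y p = fderiv ℝ B p (X p) (Y p) := rfl
    rw [eM]
    exact key_alg (fderiv ℝ B p) (fderiv ℝ (fderiv ℝ B) p)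
      (fun v w => hc p v w) (fun v w x => ha p v w x)
      (fun h v w => aux_S_sym1 B hB p h v w)
      (fun h v w x => aux_S3 B hDB ha p h v w x)
      (X p) (Y p) (Z p) (W p) (fderiv ℝ X p) (fderiv ℝ Y p)
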